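/- For a 2-HOCA without zero-test, the return sets stabilize in the counter value: for every k ∈ ℕ ∪ {∞}, every σ ∈ Σ, and every m ≥ |Σ|·|Q|², Ret_k((σ,m)) = Ret_k((σ, |Σ|·|Q|²)). -/

import Mathlib

/-!  Level-2 higher-order counter automata without zero-test (2-HOCA).
Storage configurations are nonempty lists in `(Sig × ℕ)`, head = topmost entry. -/

namespace HOCA

/-- Operations of a 2-HOCA without zero-test: level-2 pop, level-2 push
(duplicating the topmost counter under a new symbol), increment of the
topmost counter (`stay(push⊥)`), decrement of the topmost counter
(`stay(pop)`, undefined at 0), and the identity. -/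
inductive HOp (Sig : Type) where
  | pop : HOp Sig
  | push (τ : Sig) : HOp Sig
  | inc : HOp Sig
  | dec : HOp Sig
  | id : HOp Sig

/-- Partial application of an operation to a storage. -/
def applyOp {Sig : Type} : HOp Sig → List (Sig × ℕ) → Option (List (Sig × ℕ))
  | .pop, _ :: t :: s => some (t :: s)
  | .pop, _ => none
  | .push τ, (σ, n) :: s => some ((τ, n) :: (σ, n) :: s)
  | .push _, [] => none
  | .inc, (σ, n) :: s => some ((σ, n + 1) :: s)
  | .inc, [] => none
  | .dec, (σ, n + 1) :: s => some ((σ, n) :: s)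
  | .dec, _ => none
  | .id, s => some s

/-- A 2-HOCA without zero-test: a transition relation; a transition
`Δ q σ op q'` is applicable in state `q` when the topmost symbol is `σ`
(the only tests are top-symbol tests). -/
structure Aut (Q Sig : Type) where
  Δ : Q → Sig → HOp Sig → Q → Prop

abbrev Config (Q Sig : Type) := Q × List (Sig × ℕ)

/-- `IsRun A L cfg lab` : the configurations `cfg 0, …, cfg L` form a run of `A`,
where the `i`-th step tests top-symbol `(lab i).1` and applies operation `(lab i).2`. -/
def IsRun {Q Sig : Type} (A : Aut Q Sig) (L : ℕ) (cfg : ℕ → Config Q Sig)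
    (lab : ℕ → Sig × HOp Sig) : Prop :=
  ∀ i < L, ∃ (n : ℕ) (rest : List (Sig × ℕ)),
    (cfg i).2 = ((lab i).1, n) :: rest ∧
    A.Δ (cfg i).1 (lab i).1 (lab i).2 (cfg (i + 1)).1 ∧
    applyOp (lab i).2 (cfg i).2 = some (cfg (i + 1)).2

/-- The run increases the height by at most `k` (for `k = ⊤`: no bound). -/
def heightBounded {Q Sig : Type} (k : ℕ∞) (L : ℕ) (cfg : ℕ → Config Q Sig) : Prop :=
  ∀ i ≤ L, ((cfg i).2.length : ℕ∞) ≤ ((cfg 0).2.length : ℕ∞) + k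

/-- `Ret_k((σ,m))` : pairs `(q,q')` such that there is a return from
`(q, (σ,m)·s)` to `(q', s)` increasing the height by at most `k`
(the final configuration is the first one whose storage is `s`). -/
def RetSet {Q Sig : Type} (A : Aut Q Sig) (k : ℕ∞) (σ : Sig) (m : ℕ) :
    Set (Q × Q) :=
  { p | ∃ (s : List (Sig × ℕ)) (L : ℕ) (cfg : ℕ → Config Q Sig)
      (lab : ℕ → Sig × HOp Sig),
      s ≠ [] ∧ IsRun A L cfg lab ∧
      cfg 0 = (p.1, (σ, m) :: s) ∧ cfg L = (p.2, s) ∧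
      (∀ i < L, (cfg i).2 ≠ s) ∧ heightBounded k L cfg }

/-- `Loop_k((σ,m))` : pairs `(q,q')` such that there is a loop from
`(q, (σ,m)·s)` to `(q', (σ,m)·s)` never visiting storage `s`,
increasing the height by at most `k`. -/
def LoopSet {Q Sig : Type} (A : Aut Q Sig) (k : ℕ∞) (σ : Sig) (m : ℕ) :
    Set (Q × Q) :=
  { p | ∃ (s : List (Sig × ℕ)) (L : ℕ) (cfg : ℕ → Config Q Sig)
      (lab : ℕ → Sig × HOp Sig),
      IsRun A L cfg lab ∧
      cfg 0 = (p.1, (σ, m) :: s) ∧ cfg L = (p.2, (σ, m) :: s) ∧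
      (∀ i ≤ L, (cfg i).2 ≠ s) ∧ heightBounded k L cfg }

end HOCA

namespace HOCA

variable {Q Sig : Type}

/-- Inductive characterization of height-`k`-bounded returns ("projected runs"). -/
inductive pret (A : Aut Q Sig) : ℕ → Sig → ℕ → Q → Q → Prop
  | pop {k : ℕ} {σ : Sig} {c : ℕ} {q q' : Q} :
      A.Δ q σ .pop q' → pret A k σ c q q'
  | id {k : ℕ} {σ : Sig} {c : ℕ} {q q₁ q' : Q} :
      A.Δ q σ .id q₁ → pret A k σ c q₁ q' → pret A k σ c q q'
  | inc {k : ℕ} {σ : Sig} {c : ℕ} {q q₁ q' : Q} :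
      A.Δ q σ .inc q₁ → pret A k σ (c + 1) q₁ q' → pret A k σ c q q'
  | dec {k : ℕ} {σ : Sig} {c : ℕ} {q q₁ q' : Q} :
      A.Δ q σ .dec q₁ → pret A k σ c q₁ q' → pret A k σ (c + 1) q q'
  | push {k : ℕ} {σ τ : Sig} {c : ℕ} {q q₁ q₂ q' : Q} :
      A.Δ q σ (.push τ) q₁ → pret A k τ c q₁ q₂ → pret A (k + 1) σ c q₂ q' →
      pret A (k + 1) σ c q q'

variable {A : Aut Q Sig}

lemma pret_mono_k {k k' : ℕ} {σ : Sig} {c : ℕ} {q q' : Q}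
    (h : pret A k σ c q q') (hk : k ≤ k') : pret A k' σ c q q' := by
  induction h generalizing k' with
  | pop h => exact .pop h
  | id h _ ih => exact .id h (ih hk)
  | inc h _ ih => exact .inc h (ih hk)
  | dec h _ ih => exact .dec h (ih hk)
  | push h _ _ ih₁ ih₂ =>
      obtain ⟨k'', rfl⟩ : ∃ k'', k' = k'' + 1 := ⟨k' - 1, by omega⟩
      exact .push h (ih₁ (by omega)) (ih₂ (by omega))

lemma pret_mono_c {k : ℕ} {σ : Sig} {c : ℕ} {q q' : Q}
    (h : pret A k σ c q q') : pret A k σ (c + 1) q q' := by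
  induction h with
  | pop h => exact .pop h
  | id h _ ih => exact .id h ih
  | inc h _ ih => exact .inc h ih
  | dec h _ ih => exact .dec h ih
  | push h _ _ ih₁ ih₂ => exact .push h ih₁ ih₂

lemma pret_mono_c_le {k : ℕ} {σ : Sig} {c c' : ℕ} {q q' : Q}
    (hc : c ≤ c') (h : pret A k σ c q q') : pret A k σ c' q q' := by
  induction hc with
  | refl => exact h
  | step _ ih => exact pret_mono_c ih

/-- Key descent lemma: if no pair is "new" at counter value `v + 1` (at any
level `≤ j`), then any return derivation at a counter `> v + 1` can be shifted
down by one. -/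
lemma pret_down {j v : ℕ}
    (hA : ∀ j' ≤ j, ∀ (τ : Sig) (p p' : Q),
      pret A j' τ (v + 1) p p' → pret A j' τ v p p') :
    ∀ {j₀ : ℕ} {σ : Sig} {d : ℕ} {q q' : Q}, pret A j₀ σ d q q' → j₀ ≤ j →
      ∀ c, d = c + 1 → v + 1 ≤ c → pret A j₀ σ c q q' := by
  intro j₀ σ d q q' h
  induction h with
  | pop h => intro _ c _ _; exact .pop h
  | id h _ ih => intro hj c hc hv; exact .id h (ih hj c hc hv)
  | inc h _ ih =>
      intro hj c hc hv
      exact .inc h (ih hj (c + 1) (by omega) (by omega))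
  | dec h hsub ih =>
      -- root at e + 1, sub at e ; goal at c with e + 1 = c + 1, so e = c
      intro hj c hc hv
      have hec : _ = c := Nat.succ_injective hc
      rcases eq_or_lt_of_le hv with hve | hvlt
      · -- c = v + 1 : use the hypothesis on the sub-derivation at v + 1
        rw [hec, ← hve] at hsub
        rw [← hve]
        exact .dec h (hA _ hj _ _ _ hsub)
      · -- c ≥ v + 2
        obtain ⟨c', rfl⟩ : ∃ c', c = c' + 1 := ⟨c - 1, by omega⟩
        exact .dec h (ih hj c' (by omega) (by omega))
  | push h _ _ ih₁ ih₂ =>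
      intro hj c hc hv
      exact .push h (ih₁ (by omega) c hc hv) (ih₂ hj c hc hv)

/-- "Some pair is new at counter value `v+1` at level `j`". -/
def badL (A : Aut Q Sig) (j v : ℕ) : Prop :=
  ∃ (τ : Sig) (p p' : Q), pret A j τ (v + 1) p p' ∧ ¬ pret A j τ v p p'

def bad (A : Aut Q Sig) (v : ℕ) : Prop := ∃ j, badL A j v

lemma bad_down {j v : ℕ} (h : badL A j (v + 1)) : ∃ j' ≤ j, badL A j' v := by
  by_contra hc
  push_neg at hc
  obtain ⟨τ, p, p', h1, h2⟩ := h
  have hA : ∀ j' ≤ j, ∀ (τ : Sig) (pp pp' : Q),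
      pret A j' τ (v + 1) pp pp' → pret A j' τ v pp pp' := by
    intro j' hj' τ' pp pp' hp
    by_contra hnp
    exact hc j' hj' ⟨τ', pp, pp', hp, hnp⟩
  exact h2 (pret_down hA h1 le_rfl (v + 1) rfl (by omega))

lemma not_bad_big [Fintype Q] [Fintype Sig] {v : ℕ}
    (hv : Fintype.card Sig * Fintype.card Q ^ 2 ≤ v) : ¬ bad A v := by
  classical
  intro hbad
  -- badness propagates downwards
  have hball : ∀ u ≤ v, bad A u := by
    have key : ∀ d u, u + d = v → bad A u := by
      intro d
      induction d with
      | zero =>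
          intro u h
          have : u = v := by omega
          rw [this]; exact hbad
      | succ d ih =>
          intro u h
          have hb1 : bad A (u + 1) := ih (u + 1) (by omega)
          obtain ⟨j, hj⟩ := hb1
          obtain ⟨j', _, hj'⟩ := bad_down hj
          exact ⟨j', hj'⟩
    intro u hu
    exact key (v - u) u (by omega)
  -- minimal level at which something is new at value `u+1`
  let jm : ℕ → ℕ := fun u => if h : bad A u then Nat.find h else 0
  have hjm_spec : ∀ u ≤ v, badL A (jm u) u := by
    intro u hu
    have h := hball u hu
    simp only [jm, dif_pos h]
    exact Nat.find_spec h
  have hjm_step : ∀ u, u < v → jm u ≤ jm (u + 1) := by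
    intro u hu
    obtain ⟨j', hle, hbl⟩ := bad_down (hjm_spec (u + 1) (by omega))
    have h0 := hball u (by omega)
    calc jm u = Nat.find h0 := by simp only [jm, dif_pos h0]
      _ ≤ j' := Nat.find_min' h0 hbl
      _ ≤ jm (u + 1) := hle
  have hjm_mono : ∀ u u', u ≤ u' → u' ≤ v → jm u ≤ jm u' := by
    have key2 : ∀ d u, u + d ≤ v → jm u ≤ jm (u + d) := by
      intro d
      induction d with
      | zero => intro u _; exact le_rfl
      | succ d ih =>
          intro u h
          calc jm u ≤ jm (u + d) := ih u (by omega)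
            _ ≤ jm (u + d + 1) := hjm_step _ (by omega)
    intro u u' h h'
    have := key2 (u' - u) u (by omega)
    have he : u + (u' - u) = u' := by omega
    rwa [he] at this
  -- choose the new triples
  have hW : ∀ u, u ≤ v → ∃ T : Sig × Q × Q,
      pret A (jm u) T.1 (u + 1) T.2.1 T.2.2 ∧ ¬ pret A (jm u) T.1 u T.2.1 T.2.2 := by
    intro u hu
    obtain ⟨τ, p, p', h1, h2⟩ := hjm_spec u hu
    exact ⟨(τ, p, p'), h1, h2⟩
  let f : Fin (v + 1) → Sig × Q × Q := fun u => (hW u.1 (by omega)).choose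
  have hf1 : ∀ u : Fin (v + 1),
      pret A (jm u.1) (f u).1 (u.1 + 1) (f u).2.1 (f u).2.2 :=
    fun u => (hW u.1 (by omega)).choose_spec.1
  have hf2 : ∀ u : Fin (v + 1),
      ¬ pret A (jm u.1) (f u).1 u.1 (f u).2.1 (f u).2.2 :=
    fun u => (hW u.1 (by omega)).choose_spec.2
  have hfinj : Function.Injective f := by
    have haux : ∀ a b : Fin (v + 1), a.1 < b.1 → f a ≠ f b := by
      intro a b hab he
      apply hf2 b
      have h1 := hf1 a
      rw [he] at h1
      exact pret_mono_c_le (by omega)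
        (pret_mono_k h1 (hjm_mono a.1 b.1 (by omega) (by omega)))
    intro a b he
    rcases lt_trichotomy a.1 b.1 with h | h | h
    · exact absurd he (haux a b h)
    · exact Fin.ext h
    · exact absurd he.symm (haux b a h)
  have hcard := Fintype.card_le_of_injective f hfinj
  rw [Fintype.card_fin, Fintype.card_prod, Fintype.card_prod] at hcard
  have : Fintype.card Sig * Fintype.card Q ^ 2
      = Fintype.card Sig * (Fintype.card Q * Fintype.card Q) := by ring
  omega

/-- No new pairs appear at counter values `≥ |Σ|·|Q|²`. -/
lemma pret_step_down [Fintype Q] [Fintype Sig] {v k : ℕ} {σ : Sig} {q q' : Q}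
    (hv : Fintype.card Sig * Fintype.card Q ^ 2 ≤ v)
    (h : pret A k σ (v + 1) q q') : pret A k σ v q q' := by
  by_contra hn
  exact not_bad_big (A := A) hv ⟨k, σ, q, q', h, hn⟩

lemma pret_to_N [Fintype Q] [Fintype Sig] {m k : ℕ} {σ : Sig} {q q' : Q}
    (hm : Fintype.card Sig * Fintype.card Q ^ 2 ≤ m)
    (h : pret A k σ m q q') :
    pret A k σ (Fintype.card Sig * Fintype.card Q ^ 2) q q' := by
  set N := Fintype.card Sig * Fintype.card Q ^ 2 with hN
  clear_value N
  obtain ⟨d, rfl⟩ : ∃ d, m = N + d := ⟨m - N, by omega⟩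
  clear hm
  induction d with
  | zero => exact h
  | succ d ih => exact ih (pret_step_down (by omega) h)

end HOCA
namespace HOCA

variable {Q Sig : Type} {A : Aut Q Sig}

lemma applyOp_length {op : HOp Sig} {st st' : List (Sig × ℕ)}
    (h : applyOp op st = some st') : st'.length ≤ st.length + 1 := by
  cases op with
  | pop =>
      match st, h with
      | _ :: t :: s, h => injection h with h; subst h; simp
  | push τ =>
      match st, h with
      | (σ, n) :: s, h => injection h with h; subst h; simp
  | inc =>
      match st, h with
      | (σ, n) :: s, h => injection h with h; subst h; simp
  | dec =>
      match st, h with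
      | (σ, n + 1) :: s, h => injection h with h; subst h; simp
  | id =>
      injection h with h; subst h; simp

/-- Suffix preservation in one step. -/
lemma applyOp_suffix {op : HOp Sig} {st st' w s₀ : List (Sig × ℕ)}
    (hst : st = w ++ s₀) (hw : w ≠ []) (h : applyOp op st = some st') :
    st' = s₀ ∨ ∃ w', w' ≠ [] ∧ st' = w' ++ s₀ := by
  obtain ⟨a, w, rfl⟩ := List.exists_cons_of_ne_nil hw
  obtain ⟨x, n⟩ := a
  subst hst
  cases op with
  | pop =>
      cases w with
      | nil =>
          cases s₀ with
          | nil => simp [applyOp] at h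
          | cons b t =>
              simp only [List.nil_append, applyOp] at h
              injection h with h
              exact Or.inl h.symm
      | cons b w' =>
          simp only [List.cons_append, applyOp] at h
          injection h with h
          exact Or.inr ⟨b :: w', by simp, h.symm⟩
  | push τ =>
      simp only [List.cons_append, applyOp] at h
      injection h with h
      exact Or.inr ⟨(τ, n) :: (x, n) :: w, by simp, h.symm⟩
  | inc =>
      simp only [List.cons_append, applyOp] at h
      injection h with h
      exact Or.inr ⟨(x, n + 1) :: w, by simp, h.symm⟩
  | dec =>
      cases n with
      | zero => simp [applyOp] at h
      | succ n =>
          simp only [List.cons_append, applyOp] at h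
          injection h with h
          exact Or.inr ⟨(x, n) :: w, by simp, h.symm⟩
  | id =>
      simp only [applyOp] at h
      injection h with h
      exact Or.inr ⟨(x, n) :: w, by simp, h.symm⟩

/-- As long as a run does not visit `s₀`, its storage keeps `s₀` as proper suffix. -/
lemma run_form {L : ℕ} {cfg : ℕ → Config Q Sig} {lab : ℕ → Sig × HOp Sig}
    {s₀ w₀ : List (Sig × ℕ)}
    (hr : IsRun A L cfg lab) (hnv : ∀ i < L, i ≠ 0 → (cfg i).2 ≠ s₀)
    (hw₀ : w₀ ≠ []) (h0 : (cfg 0).2 = w₀ ++ s₀) :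
    ∀ i < L, ∃ w, w ≠ [] ∧ (cfg i).2 = w ++ s₀ := by
  intro i
  induction i with
  | zero => intro _; exact ⟨w₀, hw₀, h0⟩
  | succ i ih =>
      intro hi
      obtain ⟨w, hw, hform⟩ := ih (by omega)
      obtain ⟨n, rest, _, _, hap⟩ := hr i (by omega)
      rcases applyOp_suffix hform hw hap with h | h
      · exact absurd h (hnv (i + 1) hi (by omega))
      · exact h

/-- Shifting a run. -/
lemma isRun_shift {L : ℕ} {cfg : ℕ → Config Q Sig} {lab : ℕ → Sig × HOp Sig}
    (hr : IsRun A L cfg lab) (t : ℕ) :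
    IsRun A (L - t) (fun i => cfg (t + i)) (fun i => lab (t + i)) := by
  intro i hi
  have := hr (t + i) (by omega)
  simpa [Nat.add_assoc] using this

/-- Gluing two runs. -/
def glueF {α : Type*} (L₁ : ℕ) (c₁ c₂ : ℕ → α) : ℕ → α :=
  fun i => if i ≤ L₁ then c₁ i else c₂ (i - L₁)

def glueL {α : Type*} (L₁ : ℕ) (l₁ l₂ : ℕ → α) : ℕ → α :=
  fun i => if i < L₁ then l₁ i else l₂ (i - L₁)

lemma glueF_le {α : Type*} {L₁ : ℕ} {c₁ c₂ : ℕ → α} {i : ℕ} (h : i ≤ L₁) :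
    glueF L₁ c₁ c₂ i = c₁ i := by simp [glueF, h]

lemma glueF_ge {α : Type*} {L₁ : ℕ} {c₁ c₂ : ℕ → α} {i : ℕ}
    (hg : c₁ L₁ = c₂ 0) (h : L₁ ≤ i) : glueF L₁ c₁ c₂ i = c₂ (i - L₁) := by
  rcases eq_or_lt_of_le h with h' | h'
  · subst h'
    simp [glueF, hg]
  · simp [glueF, Nat.not_le.mpr h']

lemma isRun_glue {L₁ L₂ : ℕ} {c₁ c₂ : ℕ → Config Q Sig}
    {l₁ l₂ : ℕ → Sig × HOp Sig}
    (h₁ : IsRun A L₁ c₁ l₁) (h₂ : IsRun A L₂ c₂ l₂) (hg : c₁ L₁ = c₂ 0) :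
    IsRun A (L₁ + L₂) (glueF L₁ c₁ c₂) (glueL L₁ l₁ l₂) := by
  intro i hi
  by_cases hc : i < L₁
  · obtain ⟨n, rest, ha, hb, hcc⟩ := h₁ i hc
    refine ⟨n, rest, ?_, ?_, ?_⟩ <;>
      simp only [glueF_le (le_of_lt hc), glueF_le (by omega : i + 1 ≤ L₁),
        glueL, if_pos hc]
    exacts [ha, hb, hcc]
  · push_neg at hc
    obtain ⟨n, rest, ha, hb, hcc⟩ := h₂ (i - L₁) (by omega)
    have e1 : glueF L₁ c₁ c₂ i = c₂ (i - L₁) := glueF_ge hg hc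
    have e2 : glueF L₁ c₁ c₂ (i + 1) = c₂ (i - L₁ + 1) := by
      rw [glueF_ge hg (by omega)]
      congr 1
      omega
    refine ⟨n, rest, ?_, ?_, ?_⟩ <;>
      simp only [e1, e2, glueL, if_neg (by omega : ¬ i < L₁)]
    exacts [ha, hb, hcc]

/-- `RetRun A k σ c q q' s` : there is a `k`-height-bounded return over `s`. -/
def RetRun (A : Aut Q Sig) (k : ℕ) (σ : Sig) (c : ℕ) (q q' : Q)
    (s : List (Sig × ℕ)) : Prop :=
  ∃ (L : ℕ) (cfg : ℕ → Config Q Sig) (lab : ℕ → Sig × HOp Sig),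
    IsRun A L cfg lab ∧ cfg 0 = (q, (σ, c) :: s) ∧ cfg L = (q', s) ∧
    (∀ i < L, (cfg i).2 ≠ s) ∧
    (∀ i ≤ L, (cfg i).2.length ≤ s.length + 1 + k)

end HOCA
namespace HOCA

variable {Q Sig : Type} {A : Aut Q Sig}

lemma cons_ne_base {a : Sig × ℕ} {s : List (Sig × ℕ)} : a :: s ≠ s := by
  intro h
  have := congrArg List.length h
  simp at this

lemma RetRun.pop' {k c : ℕ} {σ : Sig} {q q' : Q} {s : List (Sig × ℕ)}
    (h : A.Δ q σ .pop q') (hs : s ≠ []) : RetRun A k σ c q q' s := by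
  obtain ⟨b, s', rfl⟩ := List.exists_cons_of_ne_nil hs
  refine ⟨1, fun i => if i = 0 then (q, (σ, c) :: b :: s') else (q', b :: s'),
    fun _ => (σ, .pop), ?_, by simp, by simp, ?_, ?_⟩
  · intro i hi
    have hi0 : i = 0 := by omega
    subst hi0
    exact ⟨c, b :: s', by simp, by simpa using h, by simp [applyOp]⟩
  · intro i hi
    have hi0 : i = 0 := by omega
    subst hi0
    simpa using cons_ne_base
  · intro i hi
    match i, hi with
    | 0, _ => simp
    | 1, _ => simp; omega

lemma RetRun.cons {k c c' : ℕ} {σ σ' : Sig} {op : HOp Sig} {q q₁ q' : Q}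
    {s : List (Sig × ℕ)}
    (hΔ : A.Δ q σ op q₁) (hap : applyOp op ((σ, c) :: s) = some ((σ', c') :: s))
    (h : RetRun A k σ' c' q₁ q' s) : RetRun A k σ c q q' s := by
  obtain ⟨L, cfg, lab, hr, h0, hL, hnv, hh⟩ := h
  refine ⟨L + 1, fun i => if i = 0 then (q, (σ, c) :: s) else cfg (i - 1),
    fun i => if i = 0 then (σ, op) else lab (i - 1), ?_, by simp, ?_, ?_, ?_⟩
  · intro i hi
    rcases Nat.eq_zero_or_pos i with rfl | hpos
    · refine ⟨c, s, by simp, by simpa [h0] using hΔ, ?_⟩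
      simpa [h0] using hap
    · have h1 : ¬ (i = 0) := by omega
      have h2 : ¬ (i + 1 = 0) := by omega
      obtain ⟨n, rest, ha, hb, hc2⟩ := hr (i - 1) (by omega)
      have e : i - 1 + 1 = i + 1 - 1 := by omega
      refine ⟨n, rest, ?_, ?_, ?_⟩ <;>
        simp only [if_neg h1, if_neg h2, ← e]
      exacts [ha, hb, hc2]
  · simp only [if_neg (by omega : ¬ (L + 1 = 0))]
    simpa using hL
  · intro i hi
    rcases Nat.eq_zero_or_pos i with rfl | hpos
    · simpa using cons_ne_base
    · simp only [if_neg (by omega : ¬ (i = 0))]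
      exact hnv (i - 1) (by omega)
  · intro i hi
    rcases Nat.eq_zero_or_pos i with rfl | hpos
    · simp
    · simp only [if_neg (by omega : ¬ (i = 0))]
      exact hh (i - 1) (by omega)

lemma RetRun.push' {k c : ℕ} {σ τ : Sig} {q q₁ q₂ q' : Q} {s : List (Sig × ℕ)}
    (hΔ : A.Δ q σ (.push τ) q₁)
    (hin : RetRun A k τ c q₁ q₂ ((σ, c) :: s))
    (hrest : RetRun A (k + 1) σ c q₂ q' s) :
    RetRun A (k + 1) σ c q q' s := by
  obtain ⟨L₁, cI, lI, hrI, h0I, hLI, hnvI, hhI⟩ := hin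
  obtain ⟨L₂, cR, lR, hrR, h0R, hLR, hnvR, hhR⟩ := hrest
  -- the single push step
  set cS : ℕ → Config Q Sig :=
    fun i => if i = 0 then (q, (σ, c) :: s) else (q₁, (τ, c) :: (σ, c) :: s) with hcS
  set lS : ℕ → Sig × HOp Sig := fun _ => (σ, .push τ) with hlS
  have hrS : IsRun A 1 cS lS := by
    intro i hi
    have hi0 : i = 0 := by omega
    subst hi0
    exact ⟨c, s, by simp [hcS, hlS], by simpa [hcS, hlS] using hΔ,
      by simp [hcS, hlS, applyOp]⟩
  have hg1 : cS 1 = cI 0 := by simp [hcS, h0I]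
  have hI1 : IsRun A (1 + L₁) (glueF 1 cS cI) (glueL 1 lS lI) :=
    isRun_glue hrS hrI hg1
  have hg2 : glueF 1 cS cI (1 + L₁) = cR 0 := by
    rw [glueF_ge hg1 (by omega)]
    simpa [hLI] using h0R.symm
  have hI2 : IsRun A ((1 + L₁) + L₂)
      (glueF (1 + L₁) (glueF 1 cS cI) cR) (glueL (1 + L₁) (glueL 1 lS lI) lR) :=
    isRun_glue hI1 hrR hg2
  -- evaluation helpers
  set C : ℕ → Config Q Sig := glueF (1 + L₁) (glueF 1 cS cI) cR with hC
  have ev0 : C 0 = (q, (σ, c) :: s) := by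
    rw [hC, glueF_le (by omega), glueF_le (by omega)]
    simp [hcS]
  have evI : ∀ i, 1 ≤ i → i ≤ 1 + L₁ → C i = cI (i - 1) := by
    intro i h1 h2
    rw [hC, glueF_le h2, glueF_ge hg1 h1]
  have evR : ∀ i, 1 + L₁ ≤ i → C i = cR (i - (1 + L₁)) := by
    intro i h1
    rw [hC, glueF_ge hg2 h1]
  -- the inner run keeps `(σ,c)::s` as suffix, so never visits `s`
  have hform : ∀ i < L₁, ∃ w, w ≠ [] ∧ (cI i).2 = w ++ ((σ, c) :: s) := by
    refine run_form hrI (fun i hi _ => hnvI i hi) (w₀ := [(τ, c)]) (by simp) ?_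
    simp [h0I]
  have hInotS : ∀ i ≤ L₁, (cI i).2 ≠ s := by
    intro i hi
    rcases eq_or_lt_of_le hi with rfl | hlt
    · rw [hLI]
      simpa using cons_ne_base
    · obtain ⟨w, hw, hform⟩ := hform i hlt
      rw [hform]
      intro he
      have := congrArg List.length he
      simp at this
      obtain ⟨a, w', rfl⟩ := List.exists_cons_of_ne_nil hw
      simp at this
      omega
  refine ⟨(1 + L₁) + L₂, C, _, hI2, ev0, ?_, ?_, ?_⟩
  · rw [evR _ (by omega)]
    simpa using hLR
  · intro i hi
    rcases Nat.eq_zero_or_pos i with rfl | hpos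
    · rw [ev0]
      simpa using cons_ne_base
    · by_cases hc2 : i ≤ 1 + L₁
      · rw [evI i hpos hc2]
        exact hInotS (i - 1) (by omega)
      · rw [evR i (by omega)]
        exact hnvR (i - (1 + L₁)) (by omega)
  · intro i hi
    rcases Nat.eq_zero_or_pos i with rfl | hpos
    · rw [ev0]; simp
    · by_cases hc2 : i ≤ 1 + L₁
      · rw [evI i hpos hc2]
        have := hhI (i - 1) (by omega)
        simp only [List.length_cons] at this
        omega
      · rw [evR i (by omega)]
        exact hhR (i - (1 + L₁)) (by omega)

/-- From the inductive characterization to actual runs. -/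
lemma pret_retRun {k c : ℕ} {σ : Sig} {q q' : Q}
    (h : pret A k σ c q q') :
    ∀ s : List (Sig × ℕ), s ≠ [] → RetRun A k σ c q q' s := by
  induction h with
  | pop h => intro s hs; exact RetRun.pop' h hs
  | id h _ ih =>
      intro s hs
      exact RetRun.cons h (by simp [applyOp]) (ih s hs)
  | inc h _ ih =>
      intro s hs
      exact RetRun.cons h (by simp [applyOp]) (ih s hs)
  | dec h _ ih =>
      intro s hs
      exact RetRun.cons h (by simp [applyOp]) (ih s hs)
  | push h _ _ ih₁ ih₂ =>
      intro s hs
      exact RetRun.push' h (ih₁ _ (by simp)) (ih₂ s hs)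

end HOCA
namespace HOCA

variable {Q Sig : Type} {A : Aut Q Sig}

lemma append_ne {w y : List (Sig × ℕ)} (hw : w ≠ []) : w ++ y ≠ y := by
  obtain ⟨a, w', rfl⟩ := List.exists_cons_of_ne_nil hw
  intro h
  have := congrArg List.length h
  simp at this
  omega

lemma isRun_mono {L L' : ℕ} {cfg : ℕ → Config Q Sig} {lab : ℕ → Sig × HOp Sig}
    (h : IsRun A L cfg lab) (hL : L' ≤ L) : IsRun A L' cfg lab :=
  fun i hi => h i (by omega)

/-- From runs to the inductive characterization. -/
lemma retRun_pret_aux :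
    ∀ L k c (σ : Sig) (q q' : Q) (s : List (Sig × ℕ)), s ≠ [] →
    ∀ (cfg : ℕ → Config Q Sig) (lab : ℕ → Sig × HOp Sig),
    IsRun A L cfg lab → cfg 0 = (q, (σ, c) :: s) → cfg L = (q', s) →
    (∀ i < L, (cfg i).2 ≠ s) → (∀ i ≤ L, (cfg i).2.length ≤ s.length + 1 + k) →
    pret A k σ c q q' := by
  intro L
  induction L using Nat.strong_induction_on with
  | _ L IH =>
  intro k c σ q q' s hs cfg lab hr h0 hL hnv hh
  classical
  have hL0 : 0 < L := by
    rcases Nat.eq_zero_or_pos L with rfl | h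
    · exfalso
      have h2 := congrArg Prod.snd (h0.symm.trans hL)
      simp only at h2
      exact append_ne (w := [(σ, c)]) (y := s) (by simp) h2
    · exact h
  obtain ⟨n, rest, htop, hΔ, hap⟩ := hr 0 hL0
  rw [h0] at htop hΔ hap
  simp only at htop hΔ hap
  have hσ : (lab 0).1 = σ ∧ n = c ∧ rest = s := by
    rw [List.cons_eq_cons] at htop
    obtain ⟨h1, h2⟩ := htop
    rw [Prod.mk.injEq] at h1
    exact ⟨h1.1.symm, h1.2.symm, h2.symm⟩
  obtain ⟨hσ1, hσ2, hσ3⟩ := hσ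
  rw [hσ1] at hΔ
  simp only [Nat.zero_add] at hΔ hap
  -- a generic tail extraction for the height-preserving one-step cases
  have tail : ∀ (σ₂ : Sig) (c₂ : ℕ), (cfg 1).2 = (σ₂, c₂) :: s →
      pret A k σ₂ c₂ (cfg 1).1 q' := by
    intro σ₂ c₂ h1
    refine IH (L - 1) (by omega) k c₂ σ₂ (cfg 1).1 q' s hs
      (fun i => cfg (1 + i)) (fun i => lab (1 + i))
      (by simpa using isRun_shift hr 1) ?_ ?_ ?_ ?_
    · rw [← h1]
    · rw [show 1 + (L - 1) = L by omega, hL]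
    · intro i hi
      exact hnv (1 + i) (by omega)
    · intro i hi
      exact hh (1 + i) (by omega)
  rcases hop : (lab 0).2 with _ | τ | _ | _ | _ <;> rw [hop] at hΔ hap
  · -- pop
    obtain ⟨b, s', rfl⟩ := List.exists_cons_of_ne_nil hs
    simp only [applyOp] at hap
    injection hap with hap
    have hL1 : L = 1 := by
      by_contra hne
      exact hnv 1 (by omega) hap.symm
    rw [hL1] at hL
    have : (cfg 1).1 = q' := by rw [hL]
    rw [this] at hΔ
    exact .pop hΔ
  · -- push τ
    simp only [applyOp] at hap
    injection hap with hap
    have hk : ∃ k', k = k' + 1 := by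
      have := hh 1 (by omega)
      rw [← hap] at this
      simp only [List.length_cons] at this
      exact ⟨k - 1, by omega⟩
    obtain ⟨k', rfl⟩ := hk
    -- first return to `(σ,c)::s`
    have hD : ∃ i, 1 ≤ i ∧ i ≤ L ∧
        ¬ ∃ w, w ≠ [] ∧ (cfg i).2 = w ++ ((σ, c) :: s) := by
      refine ⟨L, by omega, le_rfl, ?_⟩
      rintro ⟨w, hw, hform⟩
      rw [hL] at hform
      simp only at hform
      obtain ⟨a, w', rfl⟩ := List.exists_cons_of_ne_nil hw
      have := congrArg List.length hform
      simp at this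
      omega
    set t := Nat.find hD with hts
    obtain ⟨ht1, ht2, ht3⟩ := Nat.find_spec hD
    rw [← hts] at ht1 ht2 ht3
    have htmin : ∀ i, 1 ≤ i → i < t → ∃ w, w ≠ [] ∧ (cfg i).2 = w ++ ((σ, c) :: s) := by
      intro i hi1 hi2
      have := Nat.find_min hD hi2
      push_neg at this
      exact this hi1 (by omega)
    have ht21 : 2 ≤ t := by
      by_contra hcon
      have hte : t = 1 := by omega
      rw [hte] at ht3
      exact ht3 ⟨[(τ, c)], by simp, by simpa using hap.symm⟩
    have hstep : (cfg t).2 = (σ, c) :: s := by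
      obtain ⟨w, hw, hform⟩ := htmin (t - 1) (by omega) (by omega)
      obtain ⟨n₂, rest₂, _, _, hap₂⟩ := hr (t - 1) (by omega)
      rw [show t - 1 + 1 = t by omega] at hap₂
      rcases applyOp_suffix hform hw hap₂ with h | h
      · exact h
      · exact absurd h ht3
    have hinner : pret A k' τ c (cfg 1).1 (cfg t).1 := by
      refine IH (t - 1) (by omega) k' c τ (cfg 1).1 (cfg t).1 ((σ, c) :: s)
        (by simp) (fun i => cfg (1 + i)) (fun i => lab (1 + i))
        (isRun_mono (by simpa using isRun_shift hr 1) (by omega)) ?_ ?_ ?_ ?_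
      · rw [hap]
      · rw [show 1 + (t - 1) = t by omega, hstep.symm]
      · intro i hi
        obtain ⟨w, hw, hform⟩ := htmin (1 + i) (by omega) (by omega)
        rw [hform]
        exact append_ne hw
      · intro i hi
        have := hh (1 + i) (by omega)
        simp only [List.length_cons]
        omega
    have hrest : pret A (k' + 1) σ c (cfg t).1 q' := by
      refine IH (L - t) (by omega) (k' + 1) c σ (cfg t).1 q' s hs
        (fun i => cfg (t + i)) (fun i => lab (t + i))
        (by simpa using isRun_shift hr t) ?_ ?_ ?_ ?_
      · rw [← hstep]
        rfl
      · rw [show t + (L - t) = L by omega, hL]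
      · intro i hi
        exact hnv (t + i) (by omega)
      · intro i hi
        exact hh (t + i) (by omega)
    exact .push hΔ hinner hrest
  · -- inc
    simp only [applyOp] at hap
    injection hap with hap
    exact .inc hΔ (tail σ (c + 1) hap.symm)
  · -- dec
    rcases c with _ | c
    · simp [applyOp] at hap
    · simp only [applyOp] at hap
      injection hap with hap
      exact .dec hΔ (tail σ c hap.symm)
  · -- id
    simp only [applyOp] at hap
    injection hap with hap
    exact .id hΔ (tail σ c hap.symm)

end HOCA
namespace HOCA

variable {Q Sig : Type} {A : Aut Q Sig}

lemma mem_retSet_coe {k c : ℕ} {σ : Sig} {q q' : Q} :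
    (q, q') ∈ RetSet A (↑k) σ c ↔ pret A k σ c q q' := by
  constructor
  · rintro ⟨s, L, cfg, lab, hs, hr, h0, hL, hnv, hhb⟩
    refine retRun_pret_aux L k c σ q q' s hs cfg lab hr h0 hL hnv ?_
    intro i hi
    have h := hhb i hi
    rw [h0] at h
    simp only [List.length_cons] at h
    exact_mod_cast h
  · intro h
    obtain ⟨L, cfg, lab, hr, h0, hL, hnv, hh⟩ :=
      pret_retRun h [(σ, 0)] (by simp)
    refine ⟨[(σ, 0)], L, cfg, lab, by simp, hr, h0, hL, hnv, ?_⟩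
    intro i hi
    rw [h0]
    simp only [List.length_cons]
    have := hh i hi
    simp only [List.length_cons] at this
    exact_mod_cast this

lemma mem_retSet_top {c : ℕ} {σ : Sig} {p : Q × Q} :
    p ∈ RetSet A ⊤ σ c ↔ ∃ k : ℕ, p ∈ RetSet A (↑k) σ c := by
  constructor
  · rintro ⟨s, L, cfg, lab, hs, hr, h0, hL, hnv, hhb⟩
    refine ⟨L, s, L, cfg, lab, hs, hr, h0, hL, hnv, ?_⟩
    have grow : ∀ i ≤ L, (cfg i).2.length ≤ (cfg 0).2.length + i := by
      intro i
      induction i with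
      | zero => intro _; omega
      | succ i ih =>
          intro hi
          obtain ⟨n, rest, _, _, hap⟩ := hr i (by omega)
          have h1 := applyOp_length hap
          have h2 := ih (by omega)
          omega
    intro i hi
    have := grow i hi
    have h2 : (cfg i).2.length ≤ (cfg 0).2.length + L := by omega
    exact_mod_cast h2
  · rintro ⟨k, s, L, cfg, lab, hs, hr, h0, hL, hnv, hhb⟩
    refine ⟨s, L, cfg, lab, hs, hr, h0, hL, hnv, ?_⟩
    intro i hi
    rw [add_top]
    exact le_top

lemma retSet_coe_stab [Fintype Q] [Fintype Sig] {n : ℕ} {σ : Sig} {m : ℕ}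
    (hm : Fintype.card Sig * Fintype.card Q ^ 2 ≤ m) :
    RetSet A (↑n) σ m = RetSet A (↑n) σ (Fintype.card Sig * Fintype.card Q ^ 2) := by
  ext ⟨q, q'⟩
  rw [mem_retSet_coe, mem_retSet_coe]
  exact ⟨fun h => pret_to_N hm h, fun h => pret_mono_c_le hm h⟩

end HOCA

/-- For a 2-HOCA without zero-test, returns stabilize in the
counter value: for every `k ∈ ℕ ∪ {∞}`, every `σ ∈ Σ` and every
`m ≥ |Σ|·|Q|²`, `Ret_k((σ,m)) = Ret_k((σ,|Σ|·|Q|²))`. -/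
theorem hoca_ret_counter_stabilizes {Q Sig : Type} [Fintype Q] [Fintype Sig]
    (A : HOCA.Aut Q Sig) :
    ∀ (k : ℕ∞) (σ : Sig) (m : ℕ),
      Fintype.card Sig * Fintype.card Q ^ 2 ≤ m →
      HOCA.RetSet A k σ m =
        HOCA.RetSet A k σ (Fintype.card Sig * Fintype.card Q ^ 2) := by
  intro k σ m hm
  induction k using ENat.recTopCoe with
  | top =>
      ext p
      rw [HOCA.mem_retSet_top, HOCA.mem_retSet_top]
      constructor
      · rintro ⟨n, hn⟩
        exact ⟨n, (HOCA.retSet_coe_stab hm) ▸ hn⟩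
      · rintro ⟨n, hn⟩
        exact ⟨n, (HOCA.retSet_coe_stab hm).symm ▸ hn⟩
  | coe n => exact HOCA.retSet_coe_stab hm
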